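/- (FOL Adequacy) For every formula φ in the FOL fragment of ADIF and every hyperteam 𝕏 over a superset of sup(φ): (1) 𝔄, 𝕏 ⊨^{∃∀} φ iff there exists a team X ∈ 𝕏 such that 𝔄, α ⊨_FOL φ for every assignment α ∈ X; (2) 𝔄, 𝕏 ⊨^{∀∃} φ iff for every team X ∈ 𝕏 there exists an assignment α ∈ X with 𝔄, α ⊨_FOL φ. -/
import Mathlib


open scoped Classical

namespace ADIF

/-- A relational first-order structure over a signature given by relation
symbols `RSym` with arities `ar`. -/
structure Struct (RSym : Type) (ar : RSym → ℕ) where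
  A : Type
  nonempty : Nonempty A
  interp : ∀ R : RSym, (Fin (ar R) → A) → Prop

variable {Var RSym : Type} {ar : RSym → ℕ} {A : Type}

/-- Partial assignments from variables to values. -/
abbrev Asg (Var A : Type) := Var → Option A

/-- Teams of assignments. -/
abbrev Team (Var A : Type) := Set (Asg Var A)

/-- Hyperteams: sets of teams. -/
abbrev Hyperteam (Var A : Type) := Set (Team Var A)

/-- The empty assignment. -/
def emptyAsg (Var A : Type) : Asg Var A := fun _ => none

/-- Domain of a partial assignment. -/
def dom (α : Asg Var A) : Set Var := {v | α v ≠ none}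

/-- Restriction of an assignment to a set of variables. -/
noncomputable def restrictA (α : Asg Var A) (W : Set Var) : Asg Var A :=
  fun v => if v ∈ W then α v else none

/-- Restriction of a team. -/
noncomputable def restrictT (X : Team Var A) (W : Set Var) : Team Var A :=
  (fun α => restrictA α W) '' X

/-- Restriction of a hyperteam. -/
noncomputable def restrictH (𝕏 : Hyperteam Var A) (W : Set Var) : Hyperteam Var A :=
  (fun X => restrictT X W) '' 𝕏

/-- The preorder `⊑` on hyperteams. -/
def incl (𝕏₁ 𝕏₂ : Hyperteam Var A) : Prop :=
  ∀ X₁ ∈ 𝕏₁, ∃ X₂ ∈ 𝕏₂, X₂ ⊆ X₁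

/-- The equivalence `≡` on hyperteams. -/
def equivH (𝕏₁ 𝕏₂ : Hyperteam Var A) : Prop :=
  incl 𝕏₁ 𝕏₂ ∧ incl 𝕏₂ 𝕏₁

/-- The preorder `⊑_W` on hyperteams, relativized to variables in `W`. -/
noncomputable def inclW (W : Set Var) (𝕏₁ 𝕏₂ : Hyperteam Var A) : Prop :=
  incl (restrictH 𝕏₁ W) (restrictH 𝕏₂ W)

/-- The equivalence `≡_W` on hyperteams, relativized to variables in `W`. -/
noncomputable def equivW (W : Set Var) (𝕏₁ 𝕏₂ : Hyperteam Var A) : Prop :=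
  equivH (restrictH 𝕏₁ W) (restrictH 𝕏₂ W)

/-- The dual hyperteam `𝕏~`: the set of images of all choice functions for `𝕏`. -/
def dualH (𝕏 : Hyperteam Var A) : Hyperteam Var A :=
  {Y | ∃ χ : Team Var A → Asg Var A, (∀ X ∈ 𝕏, χ X ∈ X) ∧ Y = χ '' 𝕏}

/-- A hyperteam is proper if it is neither empty nor null. -/
def Proper (𝕏 : Hyperteam Var A) : Prop := 𝕏 ≠ ∅ ∧ ∅ ∉ 𝕏

/-- All assignments in all teams of `𝕏` are defined exactly on `U`. -/
def HyperteamOn (𝕏 : Hyperteam Var A) (U : Set Var) : Prop :=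
  ∀ X ∈ 𝕏, ∀ α ∈ X, dom α = U

/-- `𝕏` is a genuine hyperteam: all its assignments share the same domain. -/
def IsHyperteam (𝕏 : Hyperteam Var A) : Prop := ∃ U : Set Var, HyperteamOn 𝕏 U

/-- `𝕏` is a hyperteam over some superset of `V`. -/
def OverSup (𝕏 : Hyperteam Var A) (V : Set Var) : Prop :=
  ∃ U : Set Var, V ⊆ U ∧ HyperteamOn 𝕏 U

/-- `W`-uniform functions from assignments to values. -/
def FW (W : Set Var) : Set (Asg Var A → A) :=
  {F | ∀ α : Asg Var A, F α = F (restrictA α W)}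

/-- Update of an assignment at a variable. -/
noncomputable def updateA (α : Asg Var A) (x : Var) (a : A) : Asg Var A :=
  fun v => if v = x then some a else α v

/-- Extension of an assignment by a function for a variable. -/
noncomputable def extA (α : Asg Var A) (F : Asg Var A → A) (x : Var) : Asg Var A :=
  updateA α x (F α)

/-- Extension of a team by a function for a variable. -/
noncomputable def extT (X : Team Var A) (F : Asg Var A → A) (x : Var) : Team Var A :=
  (fun α => extA α F x) '' X

/-- Extension of a hyperteam with a variable, `W`-uniformly. -/
noncomputable def extH (W : Set Var) (𝕏 : Hyperteam Var A) (x : Var) : Hyperteam Var A :=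
  {Y | ∃ X ∈ 𝕏, ∃ F ∈ FW W, Y = extT X F x}

/-- Bipartitions of a hyperteam. -/
def Bipartition (𝕏₁ 𝕏₂ 𝕏 : Hyperteam Var A) : Prop :=
  𝕏₁ ∩ 𝕏₂ = ∅ ∧ 𝕏₁ ∪ 𝕏₂ = 𝕏

/-- Cylindrification of a team with respect to a variable. -/
noncomputable def cylT (X : Team Var A) (x : Var) : Team Var A :=
  {β | ∃ α ∈ X, ∃ a : A, β = updateA α x a}

/-- Cylindrification of a hyperteam with respect to a variable. -/
noncomputable def cylH (𝕏 : Hyperteam Var A) (x : Var) : Hyperteam Var A :=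
  (fun X => cylT X x) '' 𝕏

/-- ADIF formulas over variables `Var` and a relational signature. -/
inductive Formula (Var RSym : Type) (ar : RSym → ℕ) : Type
  | fls : Formula Var RSym ar
  | tru : Formula Var RSym ar
  | atom (R : RSym) (xs : Fin (ar R) → Var) : Formula Var RSym ar
  | not (φ : Formula Var RSym ar) : Formula Var RSym ar
  | and (φ ψ : Formula Var RSym ar) : Formula Var RSym ar
  | or (φ ψ : Formula Var RSym ar) : Formula Var RSym ar
  | ex (s : Bool) (W : Finset Var) (x : Var) (φ : Formula Var RSym ar) : Formula Var RSym ar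
  | all (s : Bool) (W : Finset Var) (x : Var) (φ : Formula Var RSym ar) : Formula Var RSym ar

/-- The constraint set `⟦±W⟧`: `W` itself for `+` (`s = true`),
its complement for `−` (`s = false`). -/
def denot (s : Bool) (W : Finset Var) : Set Var :=
  if s then (↑W : Set Var) else (↑W : Set Var)ᶜ

/-- Support variables of an ADIF formula. -/
def supv : Formula Var RSym ar → Set Var
  | .fls => ∅
  | .tru => ∅
  | .atom _ xs => Set.range xs
  | .not φ => supv φ
  | .and φ ψ => supv φ ∪ supv ψ
  | .or φ ψ => supv φ ∪ supv ψ
  | .ex _ _ x φ => supv φ \ {x}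
  | .all _ _ x φ => supv φ \ {x}

/-- Free variables of an ADIF formula. -/
noncomputable def freev : Formula Var RSym ar → Set Var
  | .fls => ∅
  | .tru => ∅
  | .atom _ xs => Set.range xs
  | .not φ => freev φ
  | .and φ ψ => freev φ ∪ freev ψ
  | .or φ ψ => freev φ ∪ freev ψ
  | .ex s W x φ => if x ∈ freev φ then (freev φ \ {x}) ∪ denot s W else freev φ
  | .all s W x φ => if x ∈ freev φ then (freev φ \ {x}) ∪ denot s W else freev φ

/-- Alternation flags. -/
inductive Flag : Type
  | EA : Flag
  | AE : Flag

/-- The dual alternation flag. -/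
def Flag.dual : Flag → Flag
  | .EA => .AE
  | .AE => .EA

/-- Satisfaction of an atom by a (partial) assignment. -/
def atomSat (𝔄 : Struct RSym ar) (R : RSym) (xs : Fin (ar R) → Var)
    (α : Asg Var 𝔄.A) : Prop :=
  ∃ v : Fin (ar R) → 𝔄.A, (∀ i, α (xs i) = some (v i)) ∧ 𝔄.interp R v

/-- Hodges' alternating satisfaction relation `𝔄, 𝕏 ⊨^fl φ` for ADIF. -/
noncomputable def sat (𝔄 : Struct RSym ar) :
    Formula Var RSym ar → Flag → Hyperteam Var 𝔄.A → Prop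
  | .fls, .EA, 𝕏 => ∅ ∈ 𝕏
  | .fls, .AE, 𝕏 => 𝕏 = ∅
  | .tru, .EA, 𝕏 => 𝕏 ≠ ∅
  | .tru, .AE, 𝕏 => ∅ ∉ 𝕏
  | .atom R xs, .EA, 𝕏 => ∃ X ∈ 𝕏, ∀ α ∈ X, atomSat 𝔄 R xs α
  | .atom R xs, .AE, 𝕏 => ∀ X ∈ 𝕏, ∃ α ∈ X, atomSat 𝔄 R xs α
  | .not φ, fl, 𝕏 => ¬ sat 𝔄 φ fl.dual 𝕏
  | .and φ ψ, .EA, 𝕏 =>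
      ∀ 𝕏₁ 𝕏₂, Bipartition 𝕏₁ 𝕏₂ 𝕏 → sat 𝔄 φ .EA 𝕏₁ ∨ sat 𝔄 ψ .EA 𝕏₂
  | .and φ ψ, .AE, 𝕏 =>
      ∀ 𝕏₁ 𝕏₂, Bipartition 𝕏₁ 𝕏₂ (dualH 𝕏) → sat 𝔄 φ .EA 𝕏₁ ∨ sat 𝔄 ψ .EA 𝕏₂
  | .or φ ψ, .AE, 𝕏 =>
      ∃ 𝕏₁ 𝕏₂, Bipartition 𝕏₁ 𝕏₂ 𝕏 ∧ sat 𝔄 φ .AE 𝕏₁ ∧ sat 𝔄 ψ .AE 𝕏₂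
  | .or φ ψ, .EA, 𝕏 =>
      ∃ 𝕏₁ 𝕏₂, Bipartition 𝕏₁ 𝕏₂ (dualH 𝕏) ∧ sat 𝔄 φ .AE 𝕏₁ ∧ sat 𝔄 ψ .AE 𝕏₂
  | .ex s W x φ, .EA, 𝕏 => sat 𝔄 φ .EA (extH (denot s W) 𝕏 x)
  | .ex s W x φ, .AE, 𝕏 => sat 𝔄 φ .EA (extH (denot s W) (dualH 𝕏) x)
  | .all s W x φ, .AE, 𝕏 => sat 𝔄 φ .AE (extH (denot s W) 𝕏 x)
  | .all s W x φ, .EA, 𝕏 => sat 𝔄 φ .AE (extH (denot s W) (dualH 𝕏) x)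

/-- `φ` is `fl`-satisfiable on `𝔄`: some proper hyperteam over `sup φ` satisfies it. -/
noncomputable def SatOn (𝔄 : Struct RSym ar) (fl : Flag) (φ : Formula Var RSym ar) : Prop :=
  ∃ 𝕏 : Hyperteam Var 𝔄.A, HyperteamOn 𝕏 (supv φ) ∧ Proper 𝕏 ∧ sat 𝔄 φ fl 𝕏

/-- `φ` is `fl`-satisfiable: `fl`-satisfiable on some structure. -/
noncomputable def Satisfiable (Var : Type) {RSym : Type} {ar : RSym → ℕ}
    (fl : Flag) (φ : Formula Var RSym ar) : Prop :=
  ∃ 𝔄 : Struct RSym ar, SatOn 𝔄 fl φ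

/-- `φ ⇛^fl ψ`: `fl`-implication between ADIF formulas. -/
noncomputable def ImpliesF (fl : Flag) (φ ψ : Formula Var RSym ar) : Prop :=
  ∀ 𝔄 : Struct RSym ar, ∀ 𝕏 : Hyperteam Var 𝔄.A,
    OverSup 𝕏 (supv φ ∪ supv ψ) → sat 𝔄 φ fl 𝕏 → sat 𝔄 ψ fl 𝕏

/-- `φ ≅^fl ψ`: `fl`-equivalence between ADIF formulas. -/
noncomputable def EquivFlagF (fl : Flag) (φ ψ : Formula Var RSym ar) : Prop :=
  ImpliesF fl φ ψ ∧ ImpliesF fl ψ φ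

/-- `φ ≅ ψ`: equivalence for both alternation flags. -/
noncomputable def EquivF (φ ψ : Formula Var RSym ar) : Prop :=
  ∀ fl : Flag, EquivFlagF fl φ ψ

end ADIF

namespace ADIF

variable {Var RSym : Type} {ar : RSym → ℕ} {A : Type}

/-- A formula is atomic if it is `⊥`, `⊤` or a relational atom. -/
def IsAtomic : Formula Var RSym ar → Prop
  | .fls => True
  | .tru => True
  | .atom _ _ => True
  | _ => False

/-- Negation normal form: negation is applied only to atomic formulas. -/
def IsNNF : Formula Var RSym ar → Prop
  | .fls => True
  | .tru => True
  | .atom _ _ => True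
  | .not φ => IsAtomic φ
  | .and φ ψ => IsNNF φ ∧ IsNNF ψ
  | .or φ ψ => IsNNF φ ∧ IsNNF ψ
  | .ex _ _ _ φ => IsNNF φ
  | .all _ _ _ φ => IsNNF φ

/-- An item `Q^{±W}x` of a quantifier prefix: `q = true` means `∃`,
`q = false` means `∀`; `s = true` means `+W`, `s = false` means `−W`. -/
structure QItem (Var : Type) where
  q : Bool
  s : Bool
  W : Finset Var
  x : Var

/-- The constraint set of a quantifier-prefix item. -/
def QItem.constr (i : QItem Var) : Set Var := denot i.s i.W

/-- Well-formed quantifier prefixes: each variable is quantified at most once,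
does not occur in its own constraint set, and is not quantified in the scope of
a quantifier whose constraint set contains it. -/
def GoodPrefix : List (QItem Var) → Prop
  | [] => True
  | i :: rest =>
      i.x ∉ i.constr ∧ (∀ j ∈ rest, j.x ≠ i.x ∧ j.x ∉ i.constr) ∧ GoodPrefix rest

/-- Prefixing a formula by a quantifier prefix. -/
def applyPrefix : List (QItem Var) → Formula Var RSym ar → Formula Var RSym ar
  | [], φ => φ
  | i :: rest, φ =>
      if i.q then Formula.ex i.s i.W i.x (applyPrefix rest φ)
      else Formula.all i.s i.W i.x (applyPrefix rest φ)

/-- The extension operator `ext^fl(𝕏, Q^{±W}x)` for a single quantifier. -/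
noncomputable def extQ (fl : Flag) (𝕏 : Hyperteam Var A) (i : QItem Var) : Hyperteam Var A :=
  match fl, i.q with
  | .EA, true => extH (denot i.s i.W) 𝕏 i.x
  | .AE, false => extH (denot i.s i.W) 𝕏 i.x
  | .EA, false => dualH (extH (denot i.s i.W) (dualH 𝕏) i.x)
  | .AE, true => dualH (extH (denot i.s i.W) (dualH 𝕏) i.x)

/-- The extension operator `ext^fl(𝕏, ℘)` for a quantifier prefix. -/
noncomputable def extP (fl : Flag) : Hyperteam Var A → List (QItem Var) → Hyperteam Var A
  | 𝕏, [] => 𝕏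
  | 𝕏, i :: rest => extP fl (extQ fl 𝕏 i) rest

/-- Ordinary first-order formulas over the signature. -/
inductive FForm (Var RSym : Type) (ar : RSym → ℕ) : Type
  | fls : FForm Var RSym ar
  | tru : FForm Var RSym ar
  | atom (R : RSym) (xs : Fin (ar R) → Var) : FForm Var RSym ar
  | not (φ : FForm Var RSym ar) : FForm Var RSym ar
  | and (φ ψ : FForm Var RSym ar) : FForm Var RSym ar
  | or (φ ψ : FForm Var RSym ar) : FForm Var RSym ar
  | ex (x : Var) (φ : FForm Var RSym ar) : FForm Var RSym ar
  | all (x : Var) (φ : FForm Var RSym ar) : FForm Var RSym ar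

/-- Free variables of a first-order formula. -/
def folFree : FForm Var RSym ar → Set Var
  | .fls => ∅
  | .tru => ∅
  | .atom _ xs => Set.range xs
  | .not φ => folFree φ
  | .and φ ψ => folFree φ ∪ folFree ψ
  | .or φ ψ => folFree φ ∪ folFree ψ
  | .ex x φ => folFree φ \ {x}
  | .all x φ => folFree φ \ {x}

/-- Standard Tarskian satisfaction `𝔄, α ⊨_FOL φ` for first-order formulas. -/
noncomputable def folSat (𝔄 : Struct RSym ar) : FForm Var RSym ar → Asg Var 𝔄.A → Prop
  | .fls, _ => False
  | .tru, _ => True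
  | .atom R xs, α => atomSat 𝔄 R xs α
  | .not φ, α => ¬ folSat 𝔄 φ α
  | .and φ ψ, α => folSat 𝔄 φ α ∧ folSat 𝔄 ψ α
  | .or φ ψ, α => folSat 𝔄 φ α ∨ folSat 𝔄 ψ α
  | .ex x φ, α => ∃ a : 𝔄.A, folSat 𝔄 φ (updateA α x a)
  | .all x φ, α => ∀ a : 𝔄.A, folSat 𝔄 φ (updateA α x a)

/-- The FOL fragment of ADIF: every quantifier is `Q^{+W}x` with
`W = sup(φ) ∖ {x}`. -/
def IsFOLFrag : Formula Var RSym ar → Prop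
  | .fls => True
  | .tru => True
  | .atom _ _ => True
  | .not φ => IsFOLFrag φ
  | .and φ ψ => IsFOLFrag φ ∧ IsFOLFrag ψ
  | .or φ ψ => IsFOLFrag φ ∧ IsFOLFrag ψ
  | .ex s W x φ => s = true ∧ (↑W : Set Var) = supv φ \ {x} ∧ IsFOLFrag φ
  | .all s W x φ => s = true ∧ (↑W : Set Var) = supv φ \ {x} ∧ IsFOLFrag φ

/-- Tarskian satisfaction of an ADIF formula (in the FOL fragment) by an
assignment, quantifier decorations being ignored. -/
noncomputable def tarskiSat (𝔄 : Struct RSym ar) : Formula Var RSym ar → Asg Var 𝔄.A → Prop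
  | .fls, _ => False
  | .tru, _ => True
  | .atom R xs, α => atomSat 𝔄 R xs α
  | .not φ, α => ¬ tarskiSat 𝔄 φ α
  | .and φ ψ, α => tarskiSat 𝔄 φ α ∧ tarskiSat 𝔄 ψ α
  | .or φ ψ, α => tarskiSat 𝔄 φ α ∨ tarskiSat 𝔄 ψ α
  | .ex _ _ x φ, α => ∃ a : 𝔄.A, tarskiSat 𝔄 φ (updateA α x a)
  | .all _ _ x φ, α => ∀ a : 𝔄.A, tarskiSat 𝔄 φ (updateA α x a)

end ADIF

namespace ADIF

variable {Var RSym : Type} {ar : RSym → ℕ} {A : Type}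

lemma dual1 (𝕏 : Hyperteam Var A) (P : Asg Var A → Prop) :
    (∃ Y ∈ dualH 𝕏, ∀ α ∈ Y, P α) ↔ (∀ X ∈ 𝕏, ∃ α ∈ X, P α) := by
  constructor
  · rintro ⟨Y, ⟨χ, hχ, rfl⟩, hP⟩ X hX
    exact ⟨χ X, hχ X hX, hP _ ⟨X, hX, rfl⟩⟩
  · intro h
    refine ⟨_, ⟨fun X => if hX : X ∈ 𝕏 then (h X hX).choose else emptyAsg Var A, ?_, rfl⟩, ?_⟩
    · intro X hX
      simp only [dif_pos hX]
      exact (h X hX).choose_spec.1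
    · rintro α ⟨X, hX, rfl⟩
      simp only [dif_pos hX]
      exact (h X hX).choose_spec.2

lemma dual2 (𝕏 : Hyperteam Var A) (P : Asg Var A → Prop) :
    (∀ Y ∈ dualH 𝕏, ∃ α ∈ Y, P α) ↔ (∃ X ∈ 𝕏, ∀ α ∈ X, P α) := by
  constructor
  · intro h
    by_contra hc
    push_neg at hc
    obtain ⟨α, hαmem, hPα⟩ :=
      h ((fun X => if hX : X ∈ 𝕏 then (hc X hX).choose else emptyAsg Var A) '' 𝕏)
        ⟨_, fun X hX => by simp only [dif_pos hX]; exact (hc X hX).choose_spec.1, rfl⟩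
    obtain ⟨X, hX, rfl⟩ := hαmem
    simp only [dif_pos hX] at hPα
    exact (hc X hX).choose_spec.2 hPα
  · rintro ⟨X, hX, hP⟩ Y ⟨χ, hχ, rfl⟩
    exact ⟨χ X, ⟨X, hX, rfl⟩, hP _ (hχ X hX)⟩

lemma restrict_restrict (α : Asg Var A) (W : Set Var) :
    restrictA (restrictA α W) W = restrictA α W := by
  funext v
  by_cases h : v ∈ W <;> simp [restrictA, h]

lemma tarski_agree (𝔄 : Struct RSym ar) (φ : Formula Var RSym ar) :
    ∀ α β : Asg Var 𝔄.A, (∀ v ∈ supv φ, α v = β v) →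
      (tarskiSat 𝔄 φ α ↔ tarskiSat 𝔄 φ β) := by
  induction φ with
  | fls => intro α β _; simp [tarskiSat]
  | tru => intro α β _; simp [tarskiSat]
  | atom R xs =>
      intro α β h
      have h' : ∀ i, α (xs i) = β (xs i) := fun i => h _ ⟨i, rfl⟩
      simp only [tarskiSat, atomSat, h']
  | not φ ih =>
      intro α β h
      simp only [tarskiSat]
      exact not_congr (ih α β h)
  | and φ ψ ihφ ihψ =>
      intro α β h
      simp only [tarskiSat]
      exact and_congr (ihφ α β fun v hv => h v (Or.inl hv))
        (ihψ α β fun v hv => h v (Or.inr hv))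
  | or φ ψ ihφ ihψ =>
      intro α β h
      simp only [tarskiSat]
      exact or_congr (ihφ α β fun v hv => h v (Or.inl hv))
        (ihψ α β fun v hv => h v (Or.inr hv))
  | ex s W x φ ih =>
      intro α β h
      simp only [tarskiSat]
      refine exists_congr fun a => ih _ _ fun v hv => ?_
      by_cases hvx : v = x
      · simp [updateA, hvx]
      · simp only [updateA, if_neg hvx]
        exact h v ⟨hv, hvx⟩
  | all s W x φ ih =>
      intro α β h
      simp only [tarskiSat]
      refine forall_congr' fun a => ih _ _ fun v hv => ?_
      by_cases hvx : v = x
      · simp [updateA, hvx]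
      · simp only [updateA, if_neg hvx]
        exact h v ⟨hv, hvx⟩

lemma ext_ex [Nonempty A] {W' : Set Var} {x : Var} {Q : Asg Var A → Prop}
    (hQ : ∀ (α : Asg Var A) (a : A),
      Q (updateA (restrictA α W') x a) ↔ Q (updateA α x a))
    (𝕐 : Hyperteam Var A) :
    (∃ Y ∈ extH W' 𝕐 x, ∀ β ∈ Y, Q β) ↔
      (∃ X ∈ 𝕐, ∀ α ∈ X, ∃ a, Q (updateA α x a)) := by
  constructor
  · rintro ⟨Y, ⟨X, hX, F, _, rfl⟩, hQall⟩
    exact ⟨X, hX, fun α hα => ⟨F α, hQall _ ⟨α, hα, rfl⟩⟩⟩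
  · rintro ⟨X, hX, h⟩
    classical
    set G : Asg Var A → A := fun β =>
      if hb : ∃ a, Q (updateA β x a) then hb.choose else Classical.arbitrary A with hG
    set F : Asg Var A → A := fun α => G (restrictA α W') with hFdef
    have hF : F ∈ FW W' := by
      intro α
      simp only [hFdef, restrict_restrict]
    refine ⟨extT X F x, ⟨X, hX, F, hF, rfl⟩, ?_⟩
    rintro β ⟨α, hα, rfl⟩
    have h1 : ∃ a, Q (updateA (restrictA α W') x a) := by
      obtain ⟨a, ha⟩ := h α hα
      exact ⟨a, (hQ α a).mpr ha⟩
    show Q (updateA α x (F α))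
    have hFα : F α = h1.choose := by simp only [hFdef, hG, dif_pos h1]
    rw [hFα]
    exact (hQ α h1.choose).mp h1.choose_spec

lemma ext_all [Nonempty A] {W' : Set Var} {x : Var} {Q : Asg Var A → Prop}
    (hQ : ∀ (α : Asg Var A) (a : A),
      Q (updateA (restrictA α W') x a) ↔ Q (updateA α x a))
    (𝕐 : Hyperteam Var A) :
    (∀ Y ∈ extH W' 𝕐 x, ∃ β ∈ Y, Q β) ↔
      (∀ X ∈ 𝕐, ∃ α ∈ X, ∀ a, Q (updateA α x a)) := by
  constructor
  · intro h X hX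
    by_contra hc
    push_neg at hc
    classical
    set G : Asg Var A → A := fun β =>
      if hb : ∃ a, ¬ Q (updateA β x a) then hb.choose else Classical.arbitrary A with hG
    set F : Asg Var A → A := fun α => G (restrictA α W') with hFdef
    have hF : F ∈ FW W' := by
      intro α
      simp only [hFdef, restrict_restrict]
    obtain ⟨β, hβmem, hQβ⟩ := h (extT X F x) ⟨X, hX, F, hF, rfl⟩
    obtain ⟨α, hα, rfl⟩ := hβmem
    obtain ⟨a, ha⟩ := hc α hα
    have h1 : ∃ a, ¬ Q (updateA (restrictA α W') x a) :=
      ⟨a, fun hq => ha ((hQ α a).mp hq)⟩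
    have hFα : F α = h1.choose := by simp only [hFdef, hG, dif_pos h1]
    have : Q (updateA α x (F α)) := hQβ
    rw [hFα] at this
    exact h1.choose_spec ((hQ α h1.choose).mpr this)
  · rintro h Y ⟨X, hX, F, _, rfl⟩
    obtain ⟨α, hα, hall⟩ := h X hX
    exact ⟨extA α F x, ⟨α, hα, rfl⟩, hall (F α)⟩

lemma fol_adequacy_aux (𝔄 : Struct RSym ar) (φ : Formula Var RSym ar)
    (hφ : IsFOLFrag φ) :
    ∀ 𝕏 : Hyperteam Var 𝔄.A,
      (sat 𝔄 φ .EA 𝕏 ↔ ∃ X ∈ 𝕏, ∀ α ∈ X, tarskiSat 𝔄 φ α) ∧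
      (sat 𝔄 φ .AE 𝕏 ↔ ∀ X ∈ 𝕏, ∃ α ∈ X, tarskiSat 𝔄 φ α) := by
  haveI : Nonempty 𝔄.A := 𝔄.nonempty
  induction φ with
  | fls =>
      intro 𝕏
      constructor
      · show ∅ ∈ 𝕏 ↔ _
        simp only [tarskiSat]
        constructor
        · intro h; exact ⟨∅, h, by simp⟩
        · rintro ⟨X, hX, h⟩
          have : X = ∅ := Set.eq_empty_iff_forall_notMem.2 fun α hα => h α hα
          rwa [this] at hX
      · show 𝕏 = ∅ ↔ _
        simp only [tarskiSat]
        constructor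
        · rintro rfl X hX; exact absurd hX (Set.notMem_empty X)
        · intro h
          ext X
          simp only [Set.mem_empty_iff_false, iff_false]
          intro hX
          obtain ⟨α, _, hf⟩ := h X hX
          exact hf
  | tru =>
      intro 𝕏
      constructor
      · show 𝕏 ≠ ∅ ↔ _
        simp only [tarskiSat]
        constructor
        · intro h
          obtain ⟨X, hX⟩ := Set.nonempty_iff_ne_empty.mpr h
          exact ⟨X, hX, fun _ _ => trivial⟩
        · rintro ⟨X, hX, _⟩
          exact Set.nonempty_iff_ne_empty.mp ⟨X, hX⟩
      · show ∅ ∉ 𝕏 ↔ _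
        simp only [tarskiSat]
        constructor
        · intro h X hX
          rcases Set.eq_empty_or_nonempty X with rfl | ⟨α, hα⟩
          · exact absurd hX h
          · exact ⟨α, hα, trivial⟩
        · intro h hmem
          obtain ⟨α, hα, _⟩ := h ∅ hmem
          exact hα
  | atom R xs =>
      intro 𝕏
      exact ⟨Iff.rfl, Iff.rfl⟩
  | not φ ih =>
      rw [show IsFOLFrag (.not φ) = IsFOLFrag φ from rfl] at hφ
      intro 𝕏
      constructor
      · show ¬ sat 𝔄 φ .AE 𝕏 ↔ _
        rw [(ih hφ 𝕏).2]
        simp only [tarskiSat]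
        push_neg
        rfl
      · show ¬ sat 𝔄 φ .EA 𝕏 ↔ _
        rw [(ih hφ 𝕏).1]
        simp only [tarskiSat]
        push_neg
        rfl
  | and φ ψ ihφ ihψ =>
      obtain ⟨h1, h2⟩ := hφ
      have key : ∀ 𝕐 : Hyperteam Var 𝔄.A,
          (∀ 𝕏₁ 𝕏₂, Bipartition 𝕏₁ 𝕏₂ 𝕐 →
            sat 𝔄 φ .EA 𝕏₁ ∨ sat 𝔄 ψ .EA 𝕏₂) ↔
          ∃ X ∈ 𝕐, ∀ α ∈ X, tarskiSat 𝔄 φ α ∧ tarskiSat 𝔄 ψ α := by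
        intro 𝕐
        constructor
        · intro h
          have hb : Bipartition {X ∈ 𝕐 | ¬ ∀ α ∈ X, tarskiSat 𝔄 φ α}
              {X ∈ 𝕐 | ∀ α ∈ X, tarskiSat 𝔄 φ α} 𝕐 := by
            constructor
            · ext X; simp only [Set.mem_inter_iff, Set.mem_setOf_eq,
                Set.mem_empty_iff_false, iff_false]; tauto
            · ext X; simp only [Set.mem_union, Set.mem_setOf_eq]; tauto
          rcases h _ _ hb with hc | hc
          · obtain ⟨X, hX, hall⟩ := (ihφ h1 _).1.mp hc
            exact absurd hall hX.2
          · obtain ⟨X, hX, hall⟩ := (ihψ h2 _).1.mp hc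
            exact ⟨X, hX.1, fun α hα => ⟨hX.2 α hα, hall α hα⟩⟩
        · rintro ⟨X, hX, hall⟩ 𝕏₁ 𝕏₂ ⟨-, hun⟩
          have hXmem : X ∈ 𝕏₁ ∪ 𝕏₂ := by rw [hun]; exact hX
          rcases hXmem with h | h
          · exact Or.inl ((ihφ h1 _).1.mpr ⟨X, h, fun α hα => (hall α hα).1⟩)
          · exact Or.inr ((ihψ h2 _).1.mpr ⟨X, h, fun α hα => (hall α hα).2⟩)
      intro 𝕏
      constructor
      · exact key 𝕏
      · show (∀ 𝕏₁ 𝕏₂, Bipartition 𝕏₁ 𝕏₂ (dualH 𝕏) → _) ↔ _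
        exact (key (dualH 𝕏)).trans
          (dual1 𝕏 fun α => tarskiSat 𝔄 φ α ∧ tarskiSat 𝔄 ψ α)
  | or φ ψ ihφ ihψ =>
      obtain ⟨h1, h2⟩ := hφ
      have key : ∀ 𝕐 : Hyperteam Var 𝔄.A,
          (∃ 𝕏₁ 𝕏₂, Bipartition 𝕏₁ 𝕏₂ 𝕐 ∧
            sat 𝔄 φ .AE 𝕏₁ ∧ sat 𝔄 ψ .AE 𝕏₂) ↔
          ∀ X ∈ 𝕐, ∃ α ∈ X, tarskiSat 𝔄 φ α ∨ tarskiSat 𝔄 ψ α := by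
        intro 𝕐
        constructor
        · rintro ⟨𝕏₁, 𝕏₂, ⟨-, hun⟩, hs1, hs2⟩ X hX
          have hXmem : X ∈ 𝕏₁ ∪ 𝕏₂ := by rw [hun]; exact hX
          rcases hXmem with h | h
          · obtain ⟨α, hα, hα'⟩ := (ihφ h1 _).2.mp hs1 X h
            exact ⟨α, hα, Or.inl hα'⟩
          · obtain ⟨α, hα, hα'⟩ := (ihψ h2 _).2.mp hs2 X h
            exact ⟨α, hα, Or.inr hα'⟩
        · intro h
          refine ⟨{X ∈ 𝕐 | ∃ α ∈ X, tarskiSat 𝔄 φ α},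
            {X ∈ 𝕐 | ¬ ∃ α ∈ X, tarskiSat 𝔄 φ α}, ⟨?_, ?_⟩, ?_, ?_⟩
          · ext X
            simp only [Set.mem_inter_iff, Set.mem_setOf_eq,
              Set.mem_empty_iff_false, iff_false]
            rintro ⟨⟨-, hp⟩, ⟨-, hn⟩⟩
            exact hn hp
          · ext X
            simp only [Set.mem_union, Set.mem_setOf_eq]
            constructor
            · rintro (⟨h, -⟩ | ⟨h, -⟩) <;> exact h
            · intro hX
              by_cases hp : ∃ α ∈ X, tarskiSat 𝔄 φ α
              · exact Or.inl ⟨hX, hp⟩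
              · exact Or.inr ⟨hX, hp⟩
          · exact (ihφ h1 _).2.mpr fun X hX => hX.2
          · refine (ihψ h2 _).2.mpr fun X hX => ?_
            obtain ⟨α, hα, hor⟩ := h X hX.1
            rcases hor with hf | ht
            · exact absurd ⟨α, hα, hf⟩ hX.2
            · exact ⟨α, hα, ht⟩
      intro 𝕏
      constructor
      · show (∃ 𝕏₁ 𝕏₂, Bipartition 𝕏₁ 𝕏₂ (dualH 𝕏) ∧ _ ∧ _) ↔ _
        exact (key (dualH 𝕏)).trans
          (dual2 𝕏 fun α => tarskiSat 𝔄 φ α ∨ tarskiSat 𝔄 ψ α)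
      · exact key 𝕏
  | ex s W x φ ih =>
      obtain ⟨hs, hW, hfr⟩ := hφ
      subst hs
      have hden : denot true W = (↑W : Set Var) := by simp [denot]
      have hQ : ∀ (α : Asg Var 𝔄.A) (a : 𝔄.A),
          tarskiSat 𝔄 φ (updateA (restrictA α ↑W) x a) ↔
          tarskiSat 𝔄 φ (updateA α x a) := by
        intro α a
        refine tarski_agree 𝔄 φ _ _ fun v hv => ?_
        by_cases hvx : v = x
        · simp [updateA, hvx]
        · simp only [updateA, if_neg hvx, restrictA]
          have hvW : v ∈ (↑W : Set Var) := by rw [hW]; exact ⟨hv, hvx⟩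
          rw [if_pos hvW]
      intro 𝕏
      constructor
      · show sat 𝔄 φ .EA (extH (denot true W) 𝕏 x) ↔ _
        rw [hden, (ih hfr _).1]
        exact ext_ex hQ 𝕏
      · show sat 𝔄 φ .EA (extH (denot true W) (dualH 𝕏) x) ↔ _
        rw [hden, (ih hfr _).1]
        exact (ext_ex hQ (dualH 𝕏)).trans
          (dual1 𝕏 fun α => ∃ a, tarskiSat 𝔄 φ (updateA α x a))
  | all s W x φ ih =>
      obtain ⟨hs, hW, hfr⟩ := hφ
      subst hs
      have hden : denot true W = (↑W : Set Var) := by simp [denot]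
      have hQ : ∀ (α : Asg Var 𝔄.A) (a : 𝔄.A),
          tarskiSat 𝔄 φ (updateA (restrictA α ↑W) x a) ↔
          tarskiSat 𝔄 φ (updateA α x a) := by
        intro α a
        refine tarski_agree 𝔄 φ _ _ fun v hv => ?_
        by_cases hvx : v = x
        · simp [updateA, hvx]
        · simp only [updateA, if_neg hvx, restrictA]
          have hvW : v ∈ (↑W : Set Var) := by rw [hW]; exact ⟨hv, hvx⟩
          rw [if_pos hvW]
      intro 𝕏
      constructor
      · show sat 𝔄 φ .AE (extH (denot true W) (dualH 𝕏) x) ↔ _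
        rw [hden, (ih hfr _).2]
        exact (ext_all hQ (dualH 𝕏)).trans
          (dual2 𝕏 fun α => ∀ a, tarskiSat 𝔄 φ (updateA α x a))
      · show sat 𝔄 φ .AE (extH (denot true W) 𝕏 x) ↔ _
        rw [hden, (ih hfr _).2]
        exact ext_all hQ 𝕏

/-- FOL Adequacy. -/
theorem fol_adequacy {Var RSym : Type} {ar : RSym → ℕ}
    (𝔄 : Struct RSym ar) (φ : Formula Var RSym ar) (hφ : IsFOLFrag φ)
    (𝕏 : Hyperteam Var 𝔄.A) (h𝕏 : OverSup 𝕏 (supv φ)) :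
    (sat 𝔄 φ .EA 𝕏 ↔ ∃ X ∈ 𝕏, ∀ α ∈ X, tarskiSat 𝔄 φ α) ∧
    (sat 𝔄 φ .AE 𝕏 ↔ ∀ X ∈ 𝕏, ∃ α ∈ X, tarskiSat 𝔄 φ α) :=
  fol_adequacy_aux 𝔄 φ hφ 𝕏

end ADIF
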